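/- Let n ≥ 3 and 0 < r < R, define h_R(t) = (r^{2−n} − (tR)^{2−n})² and f_R(t) = (n−2)(tR)^{1−n}(r^{2−n} − (tR)^{2−n}) for t > r/R, and set Q₁(t) = f_R(t) h_R'(t) − f_R'(t) h_R(t), Q₂(t) = Q₁'(t), Q₃(t) = f_R(t) h_R(t). Then Q₁(1) > 0, Q₃(1) > 0, and (n−1)(Q₁(1) + Q₃(1)) + Q₂(1) > 0. -/

import Mathlib

noncomputable section

/-- `h_R(t) = (r^{2-n} - (tR)^{2-n})²` (dimension `n ≥ 3`). -/
def hN (n : ℕ) (r R t : ℝ) : ℝ := (r ^ (2 - (n : ℤ)) - (t * R) ^ (2 - (n : ℤ))) ^ 2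

/-- `f_R(t) = (n-2)(tR)^{1-n}(r^{2-n} - (tR)^{2-n})` (dimension `n ≥ 3`). -/
def fN (n : ℕ) (r R t : ℝ) : ℝ :=
  ((n : ℝ) - 2) * (t * R) ^ (1 - (n : ℤ)) * (r ^ (2 - (n : ℤ)) - (t * R) ^ (2 - (n : ℤ)))

/-- `Q₁ = f_R h_R' - f_R' h_R`. -/
def Q1 (n : ℕ) (r R t : ℝ) : ℝ :=
  fN n r R t * deriv (hN n r R) t - deriv (fN n r R) t * hN n r R t

/-- `Q₂ = Q₁'`. -/
def Q2 (n : ℕ) (r R t : ℝ) : ℝ := deriv (Q1 n r R) t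

/-- `Q₃ = f_R h_R`. -/
def Q3 (n : ℕ) (r R t : ℝ) : ℝ := fN n r R t * hN n r R t

namespace ShellAux

/-- derivative of `t ↦ (t*R)^m`. -/
lemma keyD {R : ℝ} (hR : 0 < R) (m : ℤ) {t : ℝ} (ht : 0 < t) :
    HasDerivAt (fun t : ℝ => (t * R) ^ m) ((m : ℝ) * (t * R) ^ (m - 1) * R) t :=
  by have := (hasDerivAt_zpow m (t * R) (Or.inl (by positivity))).comp t (hasDerivAt_mul_const R); exact this

variable (n : ℕ) (r R : ℝ)

def Cf (t : ℝ) : ℝ := r ^ (2 - (n : ℤ)) - (t * R) ^ (2 - (n : ℤ))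
def Cf1 (t : ℝ) : ℝ := -(((2 - (n : ℤ) : ℤ) : ℝ) * (t * R) ^ (1 - (n : ℤ)) * R)
def Cf2 (t : ℝ) : ℝ :=
  -(((2 - (n : ℤ) : ℤ) : ℝ) * (((1 - (n : ℤ) : ℤ) : ℝ) * (t * R) ^ (-(n : ℤ)) * R) * R)
def Pf (t : ℝ) : ℝ := (t * R) ^ (1 - (n : ℤ))
def Pf1 (t : ℝ) : ℝ := ((1 - (n : ℤ) : ℤ) : ℝ) * (t * R) ^ (-(n : ℤ)) * R
def Pf2 (t : ℝ) : ℝ :=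
  ((1 - (n : ℤ) : ℤ) : ℝ) * (((-(n : ℤ) : ℤ) : ℝ) * (t * R) ^ (-(n : ℤ) - 1) * R) * R
def F1 (t : ℝ) : ℝ :=
  ((n : ℝ) - 2) * Pf1 n R t * Cf n r R t + ((n : ℝ) - 2) * Pf n R t * Cf1 n R t
def F2 (t : ℝ) : ℝ :=
  (((n : ℝ) - 2) * Pf2 n R t * Cf n r R t + ((n : ℝ) - 2) * Pf1 n R t * Cf1 n R t) +
    (((n : ℝ) - 2) * Pf1 n R t * Cf1 n R t + ((n : ℝ) - 2) * Pf n R t * Cf2 n R t)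
def H1 (t : ℝ) : ℝ := 2 * Cf n r R t * Cf1 n R t
def H2 (t : ℝ) : ℝ := 2 * Cf1 n R t * Cf1 n R t + 2 * Cf n r R t * Cf2 n R t

variable {R}

lemma hC (hR : 0 < R) {t : ℝ} (ht : 0 < t) : HasDerivAt (Cf n r R) (Cf1 n R t) t := by
  have := (keyD hR (2 - (n : ℤ)) ht).const_sub (r ^ (2 - (n : ℤ)))
  rw [show (2 - (n : ℤ)) - 1 = 1 - (n : ℤ) by ring] at this
  exact this

lemma hC1 (hR : 0 < R) {t : ℝ} (ht : 0 < t) : HasDerivAt (Cf1 n R) (Cf2 n R t) t := by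
  have := (((keyD hR (1 - (n : ℤ)) ht).const_mul
      (((2 - (n : ℤ) : ℤ) : ℝ))).mul_const R).neg
  rw [show (1 - (n : ℤ)) - 1 = -(n : ℤ) by ring] at this
  exact this

lemma hP (hR : 0 < R) {t : ℝ} (ht : 0 < t) : HasDerivAt (Pf n R) (Pf1 n R t) t := by
  have := keyD hR (1 - (n : ℤ)) ht
  rw [show (1 - (n : ℤ)) - 1 = -(n : ℤ) by ring] at this
  exact this

lemma hP1 (hR : 0 < R) {t : ℝ} (ht : 0 < t) : HasDerivAt (Pf1 n R) (Pf2 n R t) t := by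
  have := ((keyD hR (-(n : ℤ)) ht).const_mul (((1 - (n : ℤ) : ℤ) : ℝ))).mul_const R
  exact this

lemma hF (hR : 0 < R) {t : ℝ} (ht : 0 < t) : HasDerivAt (fN n r R) (F1 n r R t) t :=
  ((hP n hR ht).const_mul ((n : ℝ) - 2)).mul (hC n r hR ht)

lemma hF1 (hR : 0 < R) {t : ℝ} (ht : 0 < t) : HasDerivAt (F1 n r R) (F2 n r R t) t :=
  (((hP1 n hR ht).const_mul ((n : ℝ) - 2)).mul (hC n r hR ht)).add
    (((hP n hR ht).const_mul ((n : ℝ) - 2)).mul (hC1 n hR ht))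

lemma hH (hR : 0 < R) {t : ℝ} (ht : 0 < t) : HasDerivAt (hN n r R) (H1 n r R t) t := by
  have := (hC n r hR ht).fun_pow 2
  refine this.congr_deriv ?_
  unfold H1
  push_cast
  ring

lemma hH1 (hR : 0 < R) {t : ℝ} (ht : 0 < t) : HasDerivAt (H1 n r R) (H2 n r R t) t :=
  ((hC n r hR ht).const_mul 2).mul (hC1 n hR ht)

end ShellAux

open ShellAux in
/-- positivity of the coefficients in the key estimate, `n ≥ 3`.
Let `n ≥ 3` and `0 < r < R`.  Then `Q₁(1) > 0`, `Q₃(1) > 0` and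
`(n-1)(Q₁(1) + Q₃(1)) + Q₂(1) > 0`. -/
theorem shell_coefficients_positive_dim_ge_three (n : ℕ) (hn : 3 ≤ n) (r R : ℝ)
    (hr : 0 < r) (hrR : r < R) :
    0 < Q1 n r R 1 ∧ 0 < Q3 n r R 1 ∧
      0 < ((n : ℝ) - 1) * (Q1 n r R 1 + Q3 n r R 1) + Q2 n r R 1 := by
  have hR : 0 < R := hr.trans hrR
  have hRne : R ≠ 0 := ne_of_gt hR
  -- closed forms for Q1, Q2
  have hq1 : ∀ t : ℝ, 0 < t →
      Q1 n r R t = fN n r R t * H1 n r R t - F1 n r R t * hN n r R t := by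
    intro t ht
    unfold Q1
    rw [(hH n r hR ht).deriv, (hF n r hR ht).deriv]
  have hq2 : Q2 n r R 1 = F1 n r R 1 * H1 n r R 1 + fN n r R 1 * H2 n r R 1 -
      (F2 n r R 1 * hN n r R 1 + F1 n r R 1 * H1 n r R 1) := by
    have hev : Q1 n r R =ᶠ[nhds 1] fun t => fN n r R t * H1 n r R t - F1 n r R t * hN n r R t := by
      filter_upwards [Ioi_mem_nhds (by norm_num : (0:ℝ) < 1)] with t ht
      exact hq1 t ht
    have hder : HasDerivAt (fun t => fN n r R t * H1 n r R t - F1 n r R t * hN n r R t)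
        (F1 n r R 1 * H1 n r R 1 + fN n r R 1 * H2 n r R 1 -
          (F2 n r R 1 * hN n r R 1 + F1 n r R 1 * H1 n r R 1)) 1 :=
      (((hF n r hR one_pos).mul (hH1 n r hR one_pos)).sub
        ((hF1 n r hR one_pos).mul (hH n r hR one_pos)))
    unfold Q2
    rw [hev.deriv_eq, hder.deriv]
  -- abbreviations
  obtain ⟨N, hNdef⟩ : ∃ N : ℝ, N = R ^ (-(n : ℤ) - 1) := ⟨_, rfl⟩
  have hN0 : 0 < N := hNdef ▸ zpow_pos hR _
  obtain ⟨c, hcdef⟩ : ∃ c : ℝ, c = r ^ (2 - (n : ℤ)) - R ^ (2 - (n : ℤ)) := ⟨_, rfl⟩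
  have hB : R ^ (2 - (n : ℤ)) = N * R ^ 3 := by
    rw [hNdef, ← zpow_natCast R 3, ← zpow_add₀ hRne]
    congr 1
    push_cast; ring
  have hPv : R ^ (1 - (n : ℤ)) = N * R ^ 2 := by
    rw [hNdef, ← zpow_natCast R 2, ← zpow_add₀ hRne]
    congr 1
    push_cast; ring
  have hMv : R ^ (-(n : ℤ)) = N * R := by
    rw [hNdef, ← zpow_add_one₀ hRne]
    congr 1
    ring
  have hA : r ^ (2 - (n : ℤ)) = c + N * R ^ 3 := by rw [hcdef, hB]; ring
  have hc : 0 < c := by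
    rw [hcdef]
    have h1 : r ^ (n - 2) < R ^ (n - 2) := by
      apply pow_lt_pow_left₀ hrR hr.le
      omega
    have h2 : (R ^ (n - 2))⁻¹ < (r ^ (n - 2))⁻¹ := by
      exact inv_strictAnti₀ (by positivity) h1
    have e : ∀ x : ℝ, 0 < x → x ^ (2 - (n : ℤ)) = (x ^ (n - 2))⁻¹ := by
      intro x hx
      rw [show (2 - (n : ℤ)) = -((n - 2 : ℕ) : ℤ) by push_cast; omega]
      rw [zpow_neg, zpow_natCast]
    rw [e r hr, e R hR]
    linarith
  have hn2 : (0:ℝ) < (n : ℝ) - 2 := by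
    have : (3:ℝ) ≤ (n : ℝ) := by exact_mod_cast hn
    linarith
  have hn1 : (0:ℝ) < (n : ℝ) - 1 := by linarith
  refine ⟨?_, ?_, ?_⟩
  · rw [hq1 1 one_pos]
    unfold fN hN H1 F1 Pf Pf1 Cf Cf1
    push_cast
    rw [one_mul, hA, hB, hPv, hMv]
    have hpos : 0 < ((n : ℝ) - 2) * R * c ^ 2 *
        (((n : ℝ) - 2) * N ^ 2 * R ^ 4 + ((n : ℝ) - 1) * N * R * c) := by positivity
    calc (0:ℝ) < ((n : ℝ) - 2) * R * c ^ 2 *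
        (((n : ℝ) - 2) * N ^ 2 * R ^ 4 + ((n : ℝ) - 1) * N * R * c) := hpos
      _ = _ := by ring
  · unfold Q3 fN hN
    push_cast
    rw [one_mul, hA, hB, hPv]
    have hpos : 0 < ((n : ℝ) - 2) * (N * R ^ 2) * c ^ 3 := by positivity
    calc (0:ℝ) < ((n : ℝ) - 2) * (N * R ^ 2) * c ^ 3 := hpos
      _ = _ := by ring
  · rw [hq1 1 one_pos, hq2]
    unfold Q3 fN hN H1 H2 F1 F2 Pf Pf1 Pf2 Cf Cf1 Cf2
    push_cast
    rw [one_mul, hA, hB, hPv, hMv, ← hNdef]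
    have hpos : 0 < ((n : ℝ) - 2) *
        (2 * ((n : ℝ) - 1) * ((n : ℝ) - 2) * c ^ 2 * N ^ 2 * R ^ 5 +
          2 * ((n : ℝ) - 2) ^ 2 * c * N ^ 3 * R ^ 8) := by positivity
    calc (0:ℝ) < ((n : ℝ) - 2) *
        (2 * ((n : ℝ) - 1) * ((n : ℝ) - 2) * c ^ 2 * N ^ 2 * R ^ 5 +
          2 * ((n : ℝ) - 2) ^ 2 * c * N ^ 3 * R ^ 8) := hpos
      _ = _ := by ring
end
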